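/- arXiv:1701.07733 — 2 statements merged into one kernel-verified Lean document; each statement's English description precedes it below -/
import Mathlib

section
/- Let e : Finset (Fin N) be a hyperedge and k ∈ Fin N a vertex. If k ∈ e, then C_e ∘ X_k ∘ C_e^{-1} = X_k ∘ (C_{e∖{k}})^{-1} as linear maps on the N-qudit space; if k ∉ e, then C_e ∘ X_k = X_k ∘ C_e. -/
open Finset

noncomputable section

/-- The primitive `d`-th root of unity `ω = exp(2πi/d)`. -/
def omega (d : ℕ) : ℂ := Complex.exp (2 * Real.pi * Complex.I / d)


lemma omega_pow_d (d : ℕ) [NeZero d] : omega d ^ d = 1 := by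
  rw [omega, ← Complex.exp_nat_mul]
  have hdc : (d:ℂ) ≠ 0 := Nat.cast_ne_zero.mpr (NeZero.ne d)
  have : (d:ℂ) * (2 * Real.pi * Complex.I / d) = 2 * Real.pi * Complex.I := by
    field_simp
  rw [this, Complex.exp_two_pi_mul_I]

lemma omega_ne_zero (d : ℕ) : omega d ≠ 0 := Complex.exp_ne_zero _

lemma omega_pow_mod (d : ℕ) [NeZero d] (n : ℕ) : omega d ^ n = omega d ^ (n % d) := by
  conv_lhs => rw [← Nat.mod_add_div n d]
  rw [pow_add, pow_mul, omega_pow_d, one_pow, mul_one]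

lemma omega_pow_congr (d : ℕ) [NeZero d] {m n : ℕ} (h : m % d = n % d) :
    omega d ^ m = omega d ^ n := by
  rw [omega_pow_mod d m, h, ← omega_pow_mod]

/-- The `N`-qudit Hilbert space, modeled as functions from points to amplitudes. -/
abbrev QV (d N : ℕ) := (Fin N → Fin d) → ℂ

/-- Diagonal operator with diagonal phase function `φ`. -/
def diagOp (d N : ℕ) (φ : (Fin N → Fin d) → ℂ) : Module.End ℂ (QV d N) where
  toFun ψ := fun i => φ i * ψ i
  map_add' ψ ψ' := by funext i; simp [mul_add]
  map_smul' c ψ := by funext i; simp [smul_eq_mul]; ring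

lemma diag_comm (d N : ℕ) (φ φ' : (Fin N → Fin d) → ℂ) :
    Commute (diagOp d N φ) (diagOp d N φ') := by
  apply LinearMap.ext; intro ψ; funext i
  simp [diagOp, Module.End.mul_apply]; ring

/-- The hyperedge operator `C_e`. -/
def Ce (d N : ℕ) (e : Finset (Fin N)) : Module.End ℂ (QV d N) :=
  diagOp d N fun i => omega d ^ ∏ k ∈ e, (i k : ℕ)

/-- The inverse of the hyperedge operator `C_e`. -/
def CeInv (d N : ℕ) (e : Finset (Fin N)) : Module.End ℂ (QV d N) :=
  diagOp d N fun i => (omega d ^ ∏ k ∈ e, (i k : ℕ))⁻¹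

/-- The qudit hypergraph state `|H(m)⟩` for a multiplicity function `m`. -/
def Hstate (d N : ℕ) (m : Finset (Fin N) → ZMod d) : QV d N :=
  fun i => (d : ℂ) ^ (-(N : ℂ)/2) *
    omega d ^ (∑ e : Finset (Fin N), m e * ∏ k ∈ e, ((i k : ℕ) : ZMod d)).val

/-- The generalized Pauli `X` operator on vertex `k`. -/
def Xop (d N : ℕ) [NeZero d] (k : Fin N) : Module.End ℂ (QV d N) where
  toFun ψ := fun i => ψ (Function.update i k (i k + 1))
  map_add' ψ ψ' := by funext i; simp
  map_smul' c ψ := by funext i; simp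

/-- If `k ∈ e` then `C_e ∘ X_k ∘ C_e⁻¹ = X_k ∘ (C_{e∖{k}})⁻¹`;
if `k ∉ e` then `C_e` and `X_k` commute. -/
theorem Ce_conj_Xop (d N : ℕ) [NeZero d] (hd : 2 ≤ d) (hN : 1 ≤ N)
    (e : Finset (Fin N)) (k : Fin N) :
    (k ∈ e → Ce d N e * Xop d N k * CeInv d N e = Xop d N k * CeInv d N (e.erase k)) ∧
    (k ∉ e → Ce d N e * Xop d N k = Xop d N k * Ce d N e) := by
  constructor
  · intro hk
    apply LinearMap.ext; intro ψ; funext i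
    simp only [Module.End.mul_apply, Ce, CeInv, Xop, diagOp, LinearMap.coe_mk, AddHom.coe_mk]
    set i' := Function.update i k (i k + 1) with hi'
    have hR : ∀ j ∈ e.erase k, (i' j : ℕ) = (i j : ℕ) := by
      intro j hj
      rw [hi', Function.update_of_ne (Finset.ne_of_mem_erase hj)]
    set R : ℕ := ∏ j ∈ e.erase k, (i j : ℕ) with hRdef
    have hQ : ∏ j ∈ e.erase k, (i' j : ℕ) = R := Finset.prod_congr rfl hR
    have hPi : ∏ j ∈ e, (i j : ℕ) = (i k : ℕ) * R :=
      (Finset.mul_prod_erase e _ hk).symm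
    have hPi' : ∏ j ∈ e, (i' j : ℕ) = (i' k : ℕ) * R := by
      rw [← Finset.mul_prod_erase e _ hk, hQ]
    have hik : (i' k : ℕ) = ((i k : ℕ) + 1) % d := by
      have h1 : ((1 : Fin d) : ℕ) = 1 := by
        rw [Fin.val_one']; exact Nat.mod_eq_of_lt (by omega)
      rw [hi', Function.update_self, Fin.val_add, h1]
    -- key congruence: ω^{(a+1)R} = ω^{bR}
    have key : omega d ^ ((i k : ℕ) * R + R) = omega d ^ ((i' k : ℕ) * R) := by
      apply omega_pow_congr
      rw [hik, Nat.mul_mod, Nat.mod_mod_of_dvd]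
      · rw [← Nat.mul_mod]; ring_nf
      · exact dvd_refl d
    have hω : omega d ^ ((i' k : ℕ) * R) ≠ 0 := pow_ne_zero _ (omega_ne_zero d)
    rw [hPi, hPi', hQ, ← key, pow_add, mul_inv, ← mul_assoc, ← mul_assoc,
      mul_inv_cancel₀ (pow_ne_zero _ (omega_ne_zero d)), one_mul]
  · intro hk
    apply LinearMap.ext; intro ψ; funext i
    simp only [Module.End.mul_apply, Ce, Xop, diagOp, LinearMap.coe_mk, AddHom.coe_mk]
    congr 2
    apply Finset.prod_congr rfl
    intro j hj
    rw [Function.update_of_ne (by rintro rfl; exact hk hj)]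

end
end

section
/- Fix integers d ≥ 2, n ≥ 0, and m with 1 ≤ m ≤ d−1, and define the matrix Ω : Matrix (Fin d) (Fin d) ℂ by Ω i j = Σ_{v : Fin n → Fin d} ω^{m·i·j·∏_l v(l)} (all factors read as integers in {0,…,d−1}). Then Ω has rank at least 2. Consequently the two-qudit state with (unnormalized) amplitudes Ω i j — obtained from the N-uniform qudit hypergraph state (N = n + 2) with multiplicity m on the single hyperedge containing all vertices by projecting the last n qudits onto |+⟩ — is entangled, i.e., not a product state. -/
open Finset

noncomputable section

lemma omega_isPrimitiveRoot (d : ℕ) (hd : 2 ≤ d) :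
    IsPrimitiveRoot (omega d) d := by
  simpa [omega] using Complex.isPrimitiveRoot_exp d (by omega)

lemma omega_abs (d : ℕ) (hd : 2 ≤ d) : ‖omega d‖ = 1 := by
  have h := (omega_isPrimitiveRoot d hd).pow_eq_one
  have : ‖omega d‖ ^ d = 1 := by
    rw [← norm_pow, h, norm_one]
  have hnonneg : 0 ≤ ‖omega d‖ := norm_nonneg _
  rcases lt_trichotomy (‖omega d‖) 1 with h1 | h1 | h1
  · have := pow_lt_one₀ hnonneg h1 (show d ≠ 0 by omega); linarith
  · exact h1
  · have := one_lt_pow₀ h1 (show d ≠ 0 by omega); linarith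

lemma re_le_one (d k : ℕ) (hd : 2 ≤ d) : (omega d ^ k).re ≤ 1 := by
  have := Complex.re_le_norm (omega d ^ k)
  rwa [norm_pow, omega_abs d hd, one_pow] at this

lemma re_lt_one (d m : ℕ) (hd : 2 ≤ d) (hm1 : 1 ≤ m) (hm2 : m ≤ d - 1) :
    (omega d ^ m).re < 1 := by
  have hne : omega d ^ m ≠ 1 :=
    (omega_isPrimitiveRoot d hd).pow_ne_one_of_pos_of_lt (by omega) (by omega)
  have habs : ‖omega d ^ m‖ = 1 := by
    rw [norm_pow, omega_abs d hd, one_pow]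
  rcases lt_or_eq_of_le (re_le_one d m hd) with h | h
  · exact h
  · exfalso
    apply hne
    have hsq : (omega d ^ m).re ^ 2 + (omega d ^ m).im ^ 2 = 1 := by
      have := Complex.sq_norm (omega d ^ m)
      rw [habs] at this
      simpa [Complex.normSq_apply, sq] using this.symm
    have him : (omega d ^ m).im = 0 := by nlinarith
    exact Complex.ext (by simp [h]) (by simp [him])

/-- A 2×2 matrix with nonzero determinant has rank 2. -/
lemma rank_two_of_det_ne_zero (B : Matrix (Fin 2) (Fin 2) ℂ) (h : B.det ≠ 0) :
    B.rank = 2 := by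
  have : IsUnit B := (Matrix.isUnit_iff_isUnit_det B).mpr (isUnit_iff_ne_zero.mpr h)
  simpa using Matrix.rank_of_isUnit B this

/-- For `d ≥ 2`, `n ≥ 0` and `1 ≤ m ≤ d − 1`, the amplitude
matrix `Ω i j = Σ_{v : Fin n → Fin d} ω^{m·i·j·∏ₗ v l}` of the residual two-qudit
state (obtained from the `N`-uniform qudit hypergraph state, `N = n + 2`, by
projecting the last `n` qudits onto `|+⟩`) has rank at least 2; consequently that
state is entangled, i.e. not a product state. -/
theorem residual_matrix_rank_ge_two (d n m : ℕ) (hd : 2 ≤ d)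
    (hm1 : 1 ≤ m) (hm2 : m ≤ d - 1)
    (Ω : Matrix (Fin d) (Fin d) ℂ)
    (hΩ : ∀ i j : Fin d,
      Ω i j = ∑ v : Fin n → Fin d,
        omega d ^ (m * (i : ℕ) * (j : ℕ) * ∏ l, (v l : ℕ))) :
    2 ≤ Ω.rank := by
  set i0 : Fin d := ⟨0, by omega⟩ with hi0
  set i1 : Fin d := ⟨1, by omega⟩ with hi1
  set f : Fin 2 → Fin d := ![i0, i1] with hf
  -- entries of the 2×2 submatrix
  set D : ℂ := (d : ℂ) ^ n with hD
  have hcard : (Fintype.card (Fin n → Fin d) : ℂ) = D := by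
    simp [hD, Fintype.card_fun]
  have hrow0 : ∀ j : Fin d, Ω i0 j = D := by
    intro j
    rw [hΩ]
    simp [hi0, ← hcard, Finset.card_univ]
  have hcol0 : ∀ i : Fin d, Ω i i0 = D := by
    intro i
    rw [hΩ]
    simp [hi0, ← hcard, Finset.card_univ]
  -- Ω i1 i1 ≠ D, by a real-part argument
  have h11 : Ω i1 i1 ≠ D := by
    intro hcontra
    have hre : (Ω i1 i1).re < (d : ℝ) ^ n := by
      rw [hΩ]
      rw [Complex.re_sum]
      have hval : ((i1 : ℕ) : ℕ) = 1 := rfl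
      calc ∑ v : Fin n → Fin d, (omega d ^ (m * (i1 : ℕ) * (i1 : ℕ) * ∏ l, (v l : ℕ))).re
          < ∑ _v : Fin n → Fin d, (1 : ℝ) := by
            apply Finset.sum_lt_sum
            · intro v _
              exact re_le_one d _ hd
            · refine ⟨fun _ => i1, Finset.mem_univ _, ?_⟩
              have hprod : (∏ l : Fin n, ((i1 : Fin d) : ℕ)) = 1 := by
                simp [hval]
              rw [hprod]
              simpa [hval] using re_lt_one d m hd hm1 hm2
        _ = (d : ℝ) ^ n := by
            simp [Finset.card_univ, Fintype.card_fun]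
    rw [hcontra] at hre
    rw [show (D : ℂ) = ((((d : ℝ)) ^ n : ℝ) : ℂ) by push_cast [hD]; ring,
      Complex.ofReal_re] at hre
    linarith
  -- assemble the 2×2 submatrix as a product
  have hf01 : f 0 = i0 := rfl
  have hf11 : f 1 = i1 := rfl
  set P : Matrix (Fin 2) (Fin d) ℂ :=
    (1 : Matrix (Fin d) (Fin d) ℂ).submatrix f (Equiv.refl (Fin d)) with hP
  set Q : Matrix (Fin d) (Fin 2) ℂ :=
    (1 : Matrix (Fin d) (Fin d) ℂ).submatrix (Equiv.refl (Fin d)) f with hQ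
  have hPQ : P * Ω * Q = Ω.submatrix f f := by
    rw [hP, hQ, Matrix.one_submatrix_mul, Matrix.mul_submatrix_one]
    simp
  have hdet : (Ω.submatrix f f).det ≠ 0 := by
    rw [Matrix.det_fin_two]
    simp only [Matrix.submatrix_apply, hf01, hf11]
    rw [hrow0 i0, hrow0 i1, hcol0 i1]
    have hDne : D ≠ 0 := by
      simp [hD]
      omega
    intro hzero
    apply h11
    have : D * (Ω i1 i1 - D) = 0 := by ring_nf; linear_combination hzero
    rcases mul_eq_zero.mp this with h | h
    · exact absurd h hDne
    · exact sub_eq_zero.mp h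
  have hrank2 : (Ω.submatrix f f).rank = 2 := rank_two_of_det_ne_zero _ hdet
  calc (2 : ℕ) = (P * Ω * Q).rank := by rw [hPQ, hrank2]
    _ ≤ (P * Ω).rank := Matrix.rank_mul_le_left _ _
    _ ≤ Ω.rank := Matrix.rank_mul_le_right _ _

end
end
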